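/- Let P0, P1 be symmetric positive definite, Q = I - P0^{-1/2} (P0^{1/2} P1 P0^{1/2})^{1/2} P0^{-1/2}, P_t = (I - tQ) P0 (I - tQ), and A_t = Q(tQ - I)^{-1} for t in [0,1]. Then dP_t/dt = A_t P_t + P_t A_t'. -/

import Mathlib

open Matrix

/-- The symmetric positive definite square root of a positive definite matrix. -/
noncomputable def sqrtm {n : ℕ} {P : Matrix (Fin n) (Fin n) ℝ} (hP : P.PosDef) :
    Matrix (Fin n) (Fin n) ℝ :=
  (hP.posSemidef.1.eigenvectorUnitary : Matrix (Fin n) (Fin n) ℝ) *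
    diagonal ((↑) ∘ (fun x : ℝ => Real.sqrt x) ∘ hP.posSemidef.1.eigenvalues) *
    (star hP.posSemidef.1.eigenvectorUnitary : Matrix (Fin n) (Fin n) ℝ)

open scoped MatrixOrder in
private lemma psd_cfc_sqrt {n : ℕ} {B : Matrix (Fin n) (Fin n) ℝ} (hB : B.PosSemidef) :
    (cfc Real.sqrt B).PosSemidef ∧ cfc Real.sqrt B * cfc Real.sqrt B = B := by
  have hB0 : 0 ≤ B := Matrix.nonneg_iff_posSemidef.mpr hB
  refine ⟨Matrix.nonneg_iff_posSemidef.mp (cfc_nonneg (fun x _ => Real.sqrt_nonneg x)), ?_⟩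
  rw [← cfc_mul (fun x => Real.sqrt x) (fun x => Real.sqrt x) B]
  conv_rhs => rw [← cfc_id' ℝ B]
  refine cfc_congr (fun x hx => ?_)
  exact Real.mul_self_sqrt (spectrum_nonneg_of_nonneg hB0 hx)

private lemma sqrtm_eq_cfc {n : ℕ} {P : Matrix (Fin n) (Fin n) ℝ} (hP : P.PosDef) :
    sqrtm hP = cfc Real.sqrt P := by
  rw [hP.posSemidef.1.cfc_eq, IsHermitian.cfc, sqrtm]
  rfl

private lemma sqrtm_psd {n : ℕ} {P : Matrix (Fin n) (Fin n) ℝ} (hP : P.PosDef) :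
    (sqrtm hP).PosSemidef := by
  rw [sqrtm_eq_cfc]; exact (psd_cfc_sqrt hP.posSemidef).1

private lemma sqrtm_mul_self {n : ℕ} {P : Matrix (Fin n) (Fin n) ℝ} (hP : P.PosDef) :
    sqrtm hP * sqrtm hP = P := by
  rw [sqrtm_eq_cfc]; exact (psd_cfc_sqrt hP.posSemidef).2

/-- Squared Frobenius norm of a real matrix. -/
noncomputable def frobSq {n : ℕ} (M : Matrix (Fin n) (Fin n) ℝ) : ℝ := (M * Mᵀ).trace

private lemma posDef_of_psd_det {n : ℕ} {B : Matrix (Fin n) (Fin n) ℝ}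
    (hB : B.PosSemidef) (hd : B.det ≠ 0) : B.PosDef := by
  obtain ⟨C, hC, hCC⟩ : ∃ C : Matrix (Fin n) (Fin n) ℝ, C.PosSemidef ∧ C * C = B :=
    ⟨cfc Real.sqrt B, (psd_cfc_sqrt hB).1, (psd_cfc_sqrt hB).2⟩
  subst hCC
  refine PosDef.of_dotProduct_mulVec_pos hB.1 (fun x hx => ?_)
  have hdC : C.det ≠ 0 := fun h => hd (by rw [det_mul, h, mul_zero])
  have hinj : Function.Injective (C.mulVec) :=
    mulVec_injective_iff_isUnit.mpr ((isUnit_iff_isUnit_det _).mpr (isUnit_iff_ne_zero.mpr hdC))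
  have hx' : C *ᵥ x ≠ 0 := by
    intro h
    exact hx (hinj (by simpa using h))
  have key : star x ⬝ᵥ ((C * C) *ᵥ x) = star (C *ᵥ x) ⬝ᵥ (C *ᵥ x) := by
    rw [← mulVec_mulVec, dotProduct_mulVec, star_mulVec, hC.1]
  rw [key]
  exact dotProduct_star_self_pos_iff.mpr hx'

private lemma psd_smul {n : ℕ} {c : ℝ} {M : Matrix (Fin n) (Fin n) ℝ}
    (hc : 0 ≤ c) (hM : M.PosSemidef) : (c • M).PosSemidef := by
  exact hM.smul hc

private lemma pd_smul {n : ℕ} {c : ℝ} {M : Matrix (Fin n) (Fin n) ℝ}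
    (hc : 0 < c) (hM : M.PosDef) : (c • M).PosDef := by
  exact hM.smul hc

theorem stmt_4 {n : ℕ} {P0 P1 : Matrix (Fin n) (Fin n) ℝ}
    (hP0 : P0.PosDef) (hP1 : P1.PosDef)
    (hS : (sqrtm hP0 * P1 * sqrtm hP0).PosDef)
    (Q : Matrix (Fin n) (Fin n) ℝ)
    (hQ : Q = 1 - (sqrtm hP0)⁻¹ * sqrtm hS * (sqrtm hP0)⁻¹)
    (P A : ℝ → Matrix (Fin n) (Fin n) ℝ)
    (hP : ∀ t : ℝ, P t = (1 - t • Q) * P0 * (1 - t • Q))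
    (hA : ∀ t : ℝ, A t = Q * (t • Q - 1)⁻¹) :
    ∀ t ∈ Set.Icc (0 : ℝ) 1, ∀ i j : Fin n,
      HasDerivAt (fun s : ℝ => P s i j) ((A t * P t + P t * (A t)ᵀ) i j) t := by
  intro t ht i j
  -- basic facts about square roots
  have hP0sPSD : (sqrtm hP0).PosSemidef := sqrtm_psd hP0
  have hP0sq : sqrtm hP0 * sqrtm hP0 = P0 := sqrtm_mul_self hP0
  have hP0sdet : (sqrtm hP0).det ≠ 0 := by
    intro h
    have h2 : (sqrtm hP0).det * (sqrtm hP0).det = P0.det := by rw [← det_mul, hP0sq]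
    rw [h, zero_mul] at h2
    exact hP0.det_pos.ne' h2.symm
  have hSsPSD : (sqrtm hS).PosSemidef := sqrtm_psd hS
  have hSsq : sqrtm hS * sqrtm hS = sqrtm hP0 * P1 * sqrtm hP0 := sqrtm_mul_self hS
  have hSsdet : (sqrtm hS).det ≠ 0 := by
    intro h
    have h2 : (sqrtm hS).det * (sqrtm hS).det = (sqrtm hP0 * P1 * sqrtm hP0).det := by
      rw [← det_mul, hSsq]
    rw [h, zero_mul] at h2
    exact hS.det_pos.ne' h2.symm
  have hSsPD : (sqrtm hS).PosDef := posDef_of_psd_det hSsPSD hSsdet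
  -- symmetry facts
  have hP0sT : (sqrtm hP0)ᵀ = sqrtm hP0 := by
    rw [← conjTranspose_eq_transpose_of_trivial]; exact hP0sPSD.isHermitian
  have hinvT : ((sqrtm hP0)⁻¹)ᵀ = (sqrtm hP0)⁻¹ := by rw [transpose_nonsing_inv, hP0sT]
  have hSsT : (sqrtm hS)ᵀ = sqrtm hS := by
    rw [← conjTranspose_eq_transpose_of_trivial]; exact hSsPSD.isHermitian
  -- the matrix S = P0^{-1/2} (P0^{1/2} P1 P0^{1/2})^{1/2} P0^{-1/2}
  set S : Matrix (Fin n) (Fin n) ℝ := (sqrtm hP0)⁻¹ * sqrtm hS * (sqrtm hP0)⁻¹ with hSdef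
  have hSPSD : S.PosSemidef := by
    have := hSsPSD.mul_mul_conjTranspose_same ((sqrtm hP0)⁻¹)
    rwa [conjTranspose_eq_transpose_of_trivial, hinvT] at this
  have hSdet : S.det ≠ 0 := by
    have hidet : ((sqrtm hP0)⁻¹).det ≠ 0 :=
      ((sqrtm hP0).isUnit_nonsing_inv_det (isUnit_iff_ne_zero.mpr hP0sdet)).ne_zero
    rw [hSdef, det_mul, det_mul]
    exact mul_ne_zero (mul_ne_zero hidet hSsdet) hidet
  have hSPD : S.PosDef := posDef_of_psd_det hSPSD hSdet
  have hST : Sᵀ = S := by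
    rw [hSdef]
    simp [transpose_mul, hinvT, hSsT, Matrix.mul_assoc]
  have hQsymm : Qᵀ = Q := by
    rw [hQ, transpose_sub, transpose_one, hST]
  -- positive definiteness of 1 - t • Q
  have hQS : Q = 1 - S := hQ
  have hcomb : (1 : Matrix (Fin n) (Fin n) ℝ) - t • Q = (1 - t) • (1 : Matrix (Fin n) (Fin n) ℝ) + t • S := by
    rw [hQS]; module
  have h1tQ : ((1 : Matrix (Fin n) (Fin n) ℝ) - t • Q).PosDef := by
    rw [hcomb]
    rcases eq_or_lt_of_le ht.1 with h0 | h0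
    · rw [← h0]
      simpa using Matrix.PosDef.one
    · exact Matrix.PosDef.posSemidef_add (psd_smul (by linarith [ht.2]) Matrix.PosSemidef.one)
        (pd_smul h0 hSPD)
  have hdet1 : ((1 : Matrix (Fin n) (Fin n) ℝ) - t • Q).det ≠ 0 := h1tQ.det_pos.ne'
  have hneg : t • Q - 1 = -((1 : Matrix (Fin n) (Fin n) ℝ) - t • Q) := by rw [neg_sub]
  have hdet2 : (t • Q - 1).det ≠ 0 := by
    rw [hneg, det_neg]
    exact mul_ne_zero (pow_ne_zero _ (by norm_num)) hdet1
  have hdet2' : IsUnit (t • Q - 1).det := isUnit_iff_ne_zero.mpr hdet2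
  have hL : (t • Q - 1)⁻¹ * (1 - t • Q) = -1 := by
    rw [← neg_sub (t • Q) 1, Matrix.mul_neg, nonsing_inv_mul _ hdet2']
  have hR : (1 - t • Q) * (t • Q - 1)⁻¹ = -1 := by
    rw [← neg_sub (t • Q) 1, Matrix.neg_mul, mul_nonsing_inv _ hdet2']
  -- transpose of A t
  have hAT : (A t)ᵀ = (t • Q - 1)⁻¹ * Q := by
    rw [hA, transpose_mul, transpose_nonsing_inv, transpose_sub, transpose_smul, hQsymm,
      transpose_one]
  -- the key matrix identity
  have hTarget : A t * P t + P t * (A t)ᵀ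
      = -(Q * P0 + P0 * Q) + (2 * t) • (Q * (P0 * Q)) := by
    rw [hAT, hA, hP]
    have e1 : Q * (t • Q - 1)⁻¹ * ((1 - t • Q) * P0 * (1 - t • Q))
        = -(Q * (P0 * (1 - t • Q))) := by
      calc Q * (t • Q - 1)⁻¹ * ((1 - t • Q) * P0 * (1 - t • Q))
          = Q * (((t • Q - 1)⁻¹ * (1 - t • Q)) * (P0 * (1 - t • Q))) := by
            simp only [Matrix.mul_assoc]
        _ = -(Q * (P0 * (1 - t • Q))) := by rw [hL]; simp [Matrix.neg_mul, Matrix.mul_neg]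
    have e2 : (1 - t • Q) * P0 * (1 - t • Q) * ((t • Q - 1)⁻¹ * Q)
        = -((1 - t • Q) * (P0 * Q)) := by
      calc (1 - t • Q) * P0 * (1 - t • Q) * ((t • Q - 1)⁻¹ * Q)
          = (1 - t • Q) * (P0 * (((1 - t • Q) * (t • Q - 1)⁻¹) * Q)) := by
            simp only [Matrix.mul_assoc]
        _ = -((1 - t • Q) * (P0 * Q)) := by rw [hR]; simp [Matrix.neg_mul, Matrix.mul_neg]
    rw [e1, e2]
    simp only [Matrix.sub_mul, Matrix.mul_sub, Matrix.one_mul, Matrix.mul_one,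
      Matrix.smul_mul, Matrix.mul_smul]
    module
  -- expansion of P s entrywise
  set a : ℝ := (Q * P0 + P0 * Q) i j with hadef
  set b : ℝ := (Q * (P0 * Q)) i j with hbdef
  have hexp : (fun s : ℝ => P s i j) = fun s : ℝ => P0 i j - s * a + s ^ 2 * b := by
    funext s
    rw [hP]
    have hmat : (1 - s • Q) * P0 * (1 - s • Q)
        = P0 - s • (Q * P0 + P0 * Q) + (s ^ 2) • (Q * (P0 * Q)) := by
      simp only [Matrix.sub_mul, Matrix.mul_sub, Matrix.one_mul, Matrix.mul_one,
        Matrix.smul_mul, Matrix.mul_smul, pow_two, Matrix.mul_assoc]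
      module
    rw [hmat]
    simp only [Matrix.add_apply, Matrix.sub_apply, Matrix.smul_apply, smul_eq_mul, hadef, hbdef]
  rw [hexp]
  have hval : (A t * P t + P t * (A t)ᵀ) i j = -a + 2 * t * b := by
    rw [hTarget]
    simp only [Matrix.add_apply, Matrix.neg_apply, Matrix.smul_apply, smul_eq_mul, hadef, hbdef]
  rw [hval]
  have h1 : HasDerivAt (fun s : ℝ => s * a) (1 * a) t := (hasDerivAt_id t).mul_const a
  have h2 : HasDerivAt (fun s : ℝ => s ^ 2 * b) ((2 * t ^ 1) * b) t := by
    simpa using (hasDerivAt_pow 2 t).mul_const b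
  have : HasDerivAt (fun s : ℝ => P0 i j - s * a + s ^ 2 * b) (0 - 1 * a + 2 * t ^ 1 * b) t :=
    ((hasDerivAt_const t (P0 i j)).sub h1).add h2
  convert this using 1
  ring
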